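/- Let L be a stratified complete lattice satisfying axioms A1, A2, A3, and A4. Then for every x ∈ L, x = ⨆_{α<κ} x|_α. -/

import Mathlib

/-- in a stratified complete lattice satisfying A1–A4,
every x equals the supremum of its restrictions: x = ⨆_{α<κ} x|_α. -/
theorem eq_sSup_restrictions
    {κ : Ordinal} (hκ : Order.IsSuccLimit κ) {L : Type*} [CompleteLattice L]
    (r : Ordinal → L → L → Prop)
    (hrefl : ∀ α < κ, ∀ x : L, r α x x)
    (htrans : ∀ α < κ, ∀ x y z : L, r α x y → r α y z → r α x z)
    (A1 : ∀ α β : Ordinal, α < β → β < κ → ∀ x y : L, r β x y → r α x y ∧ r α y x)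
    (A2 : ∀ x y : L, (∀ α < κ, r α x y ∧ r α y x) → x = y)
    (res : Ordinal → L → L)
    (A3 : ∀ α < κ, ∀ x : L, (r α x (res α x) ∧ r α (res α x) x) ∧
        ∀ z : L, r α x z → res α x ≤ z)
    (A4 : ∀ α < κ, ∀ (X : Set L) (y : L), X.Nonempty →
        (∀ x ∈ X, r α x y ∧ r α y x) → r α (sSup X) y ∧ r α y (sSup X)) :
    ∀ x : L, x = sSup ((fun α => res α x) '' Set.Iio κ) := by
  intro x
  -- restrictions are monotone in the level
  have hmono : ∀ β γ : Ordinal, β ≤ γ → γ < κ → res β x ≤ res γ x := by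
    intro β γ hbg hgk
    rcases eq_or_lt_of_le hbg with h | h
    · subst h; exact le_refl _
    · have hbk : β < κ := lt_trans h hgk
      have h1 : r γ x (res γ x) := ((A3 γ hgk x).1).1
      have h2 : r β x (res γ x) := (A1 β γ h hgk x (res γ x) h1).1
      exact (A3 β hbk x).2 _ h2
  apply A2
  intro α hα
  set X : Set L := (fun α => res α x) '' Set.Iio κ with hX
  set T : Set L := (fun β => res β x) '' Set.Ioo α κ with hT
  have hsucc : α + 1 < κ := by
    have := hκ.succ_lt hα
    rwa [Ordinal.add_one_eq_succ]
  -- sSup X = sSup T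
  have hXT : sSup X = sSup T := by
    apply le_antisymm
    · apply sSup_le
      rintro y ⟨β, hβ, rfl⟩
      rcases le_or_gt β α with hle | hlt
      · have : res β x ≤ res (α + 1) x :=
          hmono β (α + 1) (le_trans hle (le_of_lt (lt_add_one α))) hsucc
        exact le_trans this (le_sSup ⟨α + 1, ⟨lt_add_one α, hsucc⟩, rfl⟩)
      · exact le_sSup ⟨β, ⟨hlt, hβ⟩, rfl⟩
    · exact sSup_le_sSup (by rintro y ⟨β, hβ, rfl⟩; exact ⟨β, hβ.2, rfl⟩)
  have hTne : T.Nonempty := ⟨res (α + 1) x, α + 1, ⟨lt_add_one α, hsucc⟩, rfl⟩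
  have hall : ∀ z ∈ T, r α z x ∧ r α x z := by
    rintro z ⟨β, ⟨hab, hbk⟩, rfl⟩
    have h1 : r β (res β x) x := ((A3 β hbk x).1).2
    have := A1 α β hab hbk (res β x) x h1
    exact ⟨this.1, this.2⟩
  have := A4 α hα T x hTne hall
  rw [hXT]
  exact ⟨this.2, this.1⟩
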